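/- arXiv:2603.10281 — 7 statements merged into one kernel-verified Lean document; each statement's English description precedes it below -/
import Mathlib

section
/- Let E be a real inner product space. Suppose T₁ : E → E is δ₁-weakly θ₁-averaged and T₂ : E → E is δ₂-weakly θ₂-averaged, with δ₁, δ₂ ≥ 0 and θ₁, θ₂ ∈ (0,1). Set θ = (θ₁ + θ₂ − 2θ₁θ₂)/(1 − θ₁θ₂) and δ² = (δ₁²θ₁ + δ₂²θ₂)/θ. Then the composition T₁ ∘ T₂ is δ-weakly θ-averaged. -/
open RealInnerProductSpace

/-- A map `R` is δ-weakly nonexpansive if `‖R x - R y‖² ≤ ‖x - y‖² + δ²` for all `x, y`. -/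
def WeaklyNonexpansive {E : Type*} [NormedAddCommGroup E] [InnerProductSpace ℝ E]
    (δ : ℝ) (R : E → E) : Prop :=
  ∀ x y : E, ‖R x - R y‖ ^ 2 ≤ ‖x - y‖ ^ 2 + δ ^ 2

/-- A map `T` is δ-weakly θ-averaged if `T = θ • R + (1 - θ) • I` for some
δ-weakly nonexpansive `R`. -/
def WeaklyAveraged {E : Type*} [NormedAddCommGroup E] [InnerProductSpace ℝ E]
    (δ θ : ℝ) (T : E → E) : Prop :=
  ∃ R : E → E, WeaklyNonexpansive δ R ∧ T = fun x => θ • R x + (1 - θ) • x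


lemma convex_norm_sq {E : Type*} [NormedAddCommGroup E] [InnerProductSpace ℝ E]
    (t : ℝ) (a b : E) :
    ‖t • a + (1 - t) • b‖ ^ 2 = t * ‖a‖ ^ 2 + (1 - t) * ‖b‖ ^ 2 - t * (1 - t) * ‖a - b‖ ^ 2 := by
  simp only [← real_inner_self_eq_norm_sq]
  simp only [inner_add_left, inner_add_right, inner_sub_left, inner_sub_right,
    real_inner_smul_left, real_inner_smul_right, real_inner_comm b a]
  ring

lemma young_norm_sq {E : Type*} [NormedAddCommGroup E] [InnerProductSpace ℝ E]
    (t : ℝ) (ht : 0 < t) (u v : E) :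
    ‖u + v‖ ^ 2 ≤ (1 + t) * ‖u‖ ^ 2 + (1 + t⁻¹) * ‖v‖ ^ 2 := by
  rw [← mul_le_mul_iff_right₀ ht]
  have hne : t ≠ 0 := ne_of_gt ht
  have h1 := real_inner_le_norm u v
  have h2 := norm_add_sq_real u v
  have h3 : t * (1 + t⁻¹) = t + 1 := by field_simp
  nlinarith [sq_nonneg (t * ‖u‖ - ‖v‖), norm_nonneg u, norm_nonneg v]


theorem stmt3 {E : Type*} [NormedAddCommGroup E] [InnerProductSpace ℝ E]
    (δ₁ δ₂ θ₁ θ₂ : ℝ) (hδ₁ : 0 ≤ δ₁) (hδ₂ : 0 ≤ δ₂)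
    (hθ₁ : θ₁ ∈ Set.Ioo (0 : ℝ) 1) (hθ₂ : θ₂ ∈ Set.Ioo (0 : ℝ) 1)
    (T₁ T₂ : E → E)
    (h₁ : WeaklyAveraged δ₁ θ₁ T₁) (h₂ : WeaklyAveraged δ₂ θ₂ T₂)
    (θ δ : ℝ)
    (hθ : θ = (θ₁ + θ₂ - 2 * θ₁ * θ₂) / (1 - θ₁ * θ₂))
    (hδnn : 0 ≤ δ)
    (hδ : δ ^ 2 = (δ₁ ^ 2 * θ₁ + δ₂ ^ 2 * θ₂) / θ) :
    WeaklyAveraged δ θ (T₁ ∘ T₂) := by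
  obtain ⟨h01, h11⟩ := hθ₁
  obtain ⟨h02, h12⟩ := hθ₂
  obtain ⟨R₁, hR₁, hT₁⟩ := h₁
  obtain ⟨R₂, hR₂, hT₂⟩ := h₂
  have hprod : θ₁ * θ₂ < 1 := by nlinarith
  have hden : (0:ℝ) < 1 - θ₁ * θ₂ := by linarith
  have hnum : (0:ℝ) < θ₁ + θ₂ - 2 * θ₁ * θ₂ := by nlinarith
  have hθpos : 0 < θ := by rw [hθ]; positivity
  have hθne : θ ≠ 0 := ne_of_gt hθpos
  have hθlt : θ < 1 := by rw [hθ, div_lt_one hden]; nlinarith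
  have h1ne : (1:ℝ) - θ₁ ≠ 0 := by linarith
  have h2ne : (1:ℝ) - θ₂ ≠ 0 := by linarith
  have h1ne' : θ₁ ≠ 0 := ne_of_gt h01
  have h2ne' : θ₂ ≠ 0 := ne_of_gt h02
  refine ⟨fun x => θ⁻¹ • (T₁ (T₂ x) - (1 - θ) • x), ?_, ?_⟩
  · intro x y
    set p := x - y with hp
    set q := T₂ x - T₂ y with hq
    set t := T₁ (T₂ x) - T₁ (T₂ y) with ht
    set r := R₂ x - R₂ y with hr
    set s := R₁ (T₂ x) - R₁ (T₂ y) with hs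
    have hqid : q = θ₂ • r + (1 - θ₂) • p := by
      rw [hq, hr, hp, hT₂]; module
    have htid : t = θ₁ • s + (1 - θ₁) • q := by
      rw [ht, hs, hq, hT₁]; module
    have hcid : (fun x => θ⁻¹ • (T₁ (T₂ x) - (1 - θ) • x)) x -
        (fun x => θ⁻¹ • (T₁ (T₂ x) - (1 - θ) • x)) y = θ⁻¹ • (t - (1 - θ) • p) := by
      rw [ht, hp]; module
    set c : E := θ⁻¹ • (t - (1 - θ) • p) with hc
    have htc : t = θ • c + (1 - θ) • p := by
      rw [hc]; match_scalars <;> field_simp <;> ring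
    show ‖_ - _‖ ^ 2 ≤ ‖x - y‖ ^ 2 + δ ^ 2
    rw [hcid]
    have e1 : ‖q‖ ^ 2 = θ₂ * ‖r‖ ^ 2 + (1 - θ₂) * ‖p‖ ^ 2 - θ₂ * (1 - θ₂) * ‖r - p‖ ^ 2 := by
      rw [hqid]; exact convex_norm_sq θ₂ r p
    have e2 : ‖t‖ ^ 2 = θ₁ * ‖s‖ ^ 2 + (1 - θ₁) * ‖q‖ ^ 2 - θ₁ * (1 - θ₁) * ‖s - q‖ ^ 2 := by
      conv_lhs => rw [htid]
      exact convex_norm_sq θ₁ s q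
    have e3 : ‖t‖ ^ 2 = θ * ‖c‖ ^ 2 + (1 - θ) * ‖p‖ ^ 2 - θ * (1 - θ) * ‖c - p‖ ^ 2 := by
      conv_lhs => rw [htc]
      exact convex_norm_sq θ c p
    have hr2 : ‖r‖ ^ 2 ≤ ‖p‖ ^ 2 + δ₂ ^ 2 := hR₂ x y
    have hs2 : ‖s‖ ^ 2 ≤ ‖q‖ ^ 2 + δ₁ ^ 2 := hR₁ (T₂ x) (T₂ y)
    have hcp : ‖c - p‖ ^ 2 = θ⁻¹ ^ 2 * ‖t - p‖ ^ 2 := by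
      have h5 : c - p = θ⁻¹ • (t - p) := by
        rw [hc]; match_scalars <;> field_simp <;> ring
      rw [h5, norm_smul]
      simp [abs_of_pos (inv_pos.mpr hθpos), mul_pow]
    have htp : t - p = θ₂ • (r - p) + θ₁ • (s - q) := by
      rw [htid, hqid]; module
    set τ : ℝ := (θ₁ * (1 - θ₂)) / (θ₂ * (1 - θ₁)) with hτ
    have hτpos : 0 < τ := by
      apply div_pos <;> apply mul_pos <;> linarith
    have hy := young_norm_sq τ hτpos (θ₂ • (r - p)) (θ₁ • (s - q))
    rw [norm_smul, norm_smul] at hy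
    simp only [Real.norm_eq_abs, abs_of_pos h01, abs_of_pos h02, mul_pow] at hy
    rw [← htp] at hy
    have hnumne : θ₁ + θ₂ - 2 * θ₁ * θ₂ ≠ 0 := ne_of_gt hnum
    have hdenne : (1:ℝ) - θ₁ * θ₂ ≠ 0 := ne_of_gt hden
    have hk1 : (1 - θ) / θ * ((1 + τ) * θ₂ ^ 2) = θ₂ * (1 - θ₂) := by
      rw [hθ, hτ]
      have h3 : θ₁ + θ₂ - θ₁ * θ₂ * 2 ≠ 0 := by intro h; apply hnumne; linarith
      field_simp
      ring
    have hk2 : (1 - θ) / θ * ((1 + τ⁻¹) * θ₁ ^ 2) = θ₁ * (1 - θ₁) := by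
      rw [hθ, hτ, inv_div]
      have h3 : θ₁ + θ₂ - θ₁ * θ₂ * 2 ≠ 0 := by intro h; apply hnumne; linarith
      field_simp
      ring
    have h1θ : 0 < 1 - θ := by linarith
    have hκ : (0:ℝ) ≤ (1 - θ) / θ := le_of_lt (div_pos h1θ hθpos)
    have hy2 : (1 - θ) / θ * ‖t - p‖ ^ 2 ≤ θ₂ * (1 - θ₂) * ‖r - p‖ ^ 2
        + θ₁ * (1 - θ₁) * ‖s - q‖ ^ 2 := by
      calc (1 - θ) / θ * ‖t - p‖ ^ 2
          ≤ (1 - θ) / θ * ((1 + τ) * (θ₂ ^ 2 * ‖r - p‖ ^ 2) + (1 + τ⁻¹) * (θ₁ ^ 2 * ‖s - q‖ ^ 2)) :=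
            mul_le_mul_of_nonneg_left hy hκ
        _ = (1 - θ) / θ * ((1 + τ) * θ₂ ^ 2) * ‖r - p‖ ^ 2
            + (1 - θ) / θ * ((1 + τ⁻¹) * θ₁ ^ 2) * ‖s - q‖ ^ 2 := by ring
        _ = _ := by rw [hk1, hk2]
    have hδθ : θ * δ ^ 2 = δ₁ ^ 2 * θ₁ + δ₂ ^ 2 * θ₂ := by
      rw [hδ]; field_simp
    have e3' : θ * ‖c‖ ^ 2 = ‖t‖ ^ 2 - (1 - θ) * ‖p‖ ^ 2 + (1 - θ) / θ * ‖t - p‖ ^ 2 := by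
      rw [e3, hcp]; field_simp; ring
    -- linearize the remaining multiplications
    have m1 : θ₂ * ‖r‖ ^ 2 ≤ θ₂ * (‖p‖ ^ 2 + δ₂ ^ 2) :=
      mul_le_mul_of_nonneg_left hr2 h02.le
    have m2 : θ₁ * ‖s‖ ^ 2 ≤ θ₁ * (‖q‖ ^ 2 + δ₁ ^ 2) :=
      mul_le_mul_of_nonneg_left hs2 h01.le
    have hfinal : θ * ‖c‖ ^ 2 ≤ θ * ‖p‖ ^ 2 + θ * δ ^ 2 := by
      linarith [e3', hy2, e1, e2, hδθ, m1, m2]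
    have hres : ‖c‖ ^ 2 ≤ ‖p‖ ^ 2 + δ ^ 2 := by
      have := le_of_mul_le_mul_left (by linarith [hfinal] : θ * ‖c‖ ^ 2 ≤ θ * (‖p‖ ^ 2 + δ ^ 2)) hθpos
      exact this
    rw [hp] at hres
    exact hres
  · funext x
    simp only [Function.comp_apply, smul_smul, mul_inv_cancel₀ hθne, one_smul]
    abel
end

section
/- Let E be a real inner product space, let ε > 0 and δ ≥ 0, and let D : E → E. Then D satisfies the (ε, δ)-weakly nonexpansive residual condition if and only if the map G = (1/(1+2ε)) • (2D − I) is Δ-weakly θ-averaged with θ = 2ε/(1+2ε) and Δ² = 4δ²(1 − θ)²/θ² (equivalently Δ² = δ²/ε²), where I denotes the identity map. -/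
open RealInnerProductSpace

/-- `D` satisfies the (ε, δ)-weakly nonexpansive residual condition:
`‖(D x - x) - (D y - y)‖² ≤ ε² ‖x - y‖² + δ²` for all `x, y`. -/
def ResidualCond {E : Type*} [NormedAddCommGroup E] [InnerProductSpace ℝ E]
    (ε δ : ℝ) (D : E → E) : Prop :=
  ∀ x y : E, ‖(D x - x) - (D y - y)‖ ^ 2 ≤ ε ^ 2 * ‖x - y‖ ^ 2 + δ ^ 2

theorem stmt5 {E : Type*} [NormedAddCommGroup E] [InnerProductSpace ℝ E]
    (ε δ : ℝ) (hε : 0 < ε) (hδ : 0 ≤ δ) (D : E → E)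
    (θ Δ : ℝ) (hθ : θ = 2 * ε / (1 + 2 * ε))
    (hΔnn : 0 ≤ Δ) (hΔ : Δ ^ 2 = 4 * δ ^ 2 * (1 - θ) ^ 2 / θ ^ 2) :
    ResidualCond ε δ D ↔
      WeaklyAveraged Δ θ (fun x => (1 / (1 + 2 * ε)) • (2 • D x - x)) := by
  have h1 : (0:ℝ) < 1 + 2 * ε := by linarith
  have hεne : ε ≠ 0 := hε.ne'
  have hθpos : 0 < θ := by rw [hθ]; positivity
  have hΔ2 : Δ ^ 2 = δ ^ 2 / ε ^ 2 := by
    rw [hΔ, hθ]; field_simp; ring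
  have hnorm : ∀ x y : E, ‖ε⁻¹ • (D x - x) - ε⁻¹ • (D y - y)‖ ^ 2
      = ε⁻¹ ^ 2 * ‖(D x - x) - (D y - y)‖ ^ 2 := by
    intro x y
    rw [← smul_sub, norm_smul, mul_pow, Real.norm_eq_abs, sq_abs]
  constructor
  · intro h
    refine ⟨fun x => ε⁻¹ • (D x - x), ?_, ?_⟩
    · intro x y
      have hxy := h x y
      rw [hnorm x y, hΔ2]
      rw [div_eq_mul_inv, ← inv_pow]
      have key := mul_le_mul_of_nonneg_left hxy (by positivity : (0:ℝ) ≤ ε⁻¹ ^ 2)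
      have heq : ε⁻¹ ^ 2 * (ε ^ 2 * ‖x - y‖ ^ 2 + δ ^ 2)
          = ‖x - y‖ ^ 2 + δ ^ 2 * ε⁻¹ ^ 2 := by field_simp
      linarith [key, heq.le, heq.ge]
    · funext x
      subst hθ
      match_scalars <;> field_simp <;> ring
  · rintro ⟨R, hR, hT⟩
    have hRx : ∀ x, R x = ε⁻¹ • (D x - x) := by
      intro x
      have h := congrFun hT x
      have h2 : θ • R x = (1 / (1 + 2 * ε)) • (2 • D x - x) - (1 - θ) • x := by
        rw [eq_sub_iff_add_eq]; exact h.symm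
      calc R x = θ⁻¹ • (θ • R x) := (inv_smul_smul₀ hθpos.ne' _).symm
        _ = θ⁻¹ • ((1 / (1 + 2 * ε)) • (2 • D x - x) - (1 - θ) • x) := by rw [h2]
        _ = ε⁻¹ • (D x - x) := by
            subst hθ
            match_scalars <;> field_simp <;> ring
    intro x y
    have hxy := hR x y
    rw [hRx x, hRx y, hnorm x y, hΔ2] at hxy
    rw [div_eq_mul_inv, ← inv_pow] at hxy
    have key := mul_le_mul_of_nonneg_left hxy (by positivity : (0:ℝ) ≤ ε ^ 2)
    have heq : ε ^ 2 * (ε⁻¹ ^ 2 * ‖D x - x - (D y - y)‖ ^ 2)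
        = ‖D x - x - (D y - y)‖ ^ 2 := by field_simp
    have heq2 : ε ^ 2 * (‖x - y‖ ^ 2 + δ ^ 2 * ε⁻¹ ^ 2)
        = ε ^ 2 * ‖x - y‖ ^ 2 + δ ^ 2 := by field_simp
    linarith
end

section
/- Let E be a real inner product space, let δ ≥ 0, let R : E → E be δ-weakly nonexpansive, and let a, b > 0. Define T : E → E by T(x) = a·x − b·R(x). Then for all x, y ∈ E: ‖T(x) − T(y)‖² ≤ (a + b)²‖x − y‖² + b(a + b)δ². -/
open RealInnerProductSpace

theorem stmt7 {E : Type*} [NormedAddCommGroup E] [InnerProductSpace ℝ E]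
    (δ : ℝ) (hδ : 0 ≤ δ) (R : E → E) (hR : WeaklyNonexpansive δ R)
    (a b : ℝ) (ha : 0 < a) (hb : 0 < b) :
    ∀ x y : E,
      ‖(a • x - b • R x) - (a • y - b • R y)‖ ^ 2
        ≤ (a + b) ^ 2 * ‖x - y‖ ^ 2 + b * (a + b) * δ ^ 2 := by
  intro x y
  set u := x - y with hu
  set v := R x - R y with hv
  have hrw : (a • x - b • R x) - (a • y - b • R y) = a • u - b • v := by
    simp [hu, hv, smul_sub]; abel
  rw [hrw]
  have h1 : ‖a • u - b • v‖ ^ 2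
      = a ^ 2 * ‖u‖ ^ 2 - 2 * (a * b) * ⟪u, v⟫ + b ^ 2 * ‖v‖ ^ 2 := by
    rw [@norm_sub_sq_real, real_inner_smul_left, real_inner_smul_right,
      norm_smul, norm_smul, Real.norm_eq_abs, Real.norm_eq_abs,
      abs_of_pos ha, abs_of_pos hb]
    ring
  have h2 : ⟪u, v⟫ ≤ ‖u‖ * ‖v‖ := real_inner_le_norm u v
  have h3 : -(‖u‖ * ‖v‖) ≤ ⟪u, v⟫ := neg_le_of_abs_le (abs_real_inner_le_norm u v)
  have h4 : ‖v‖ ^ 2 ≤ ‖u‖ ^ 2 + δ ^ 2 := hR x y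
  have h5 : (0:ℝ) ≤ (‖u‖ - ‖v‖) ^ 2 := sq_nonneg _
  rw [h1]
  nlinarith [sq_nonneg (‖u‖ + ‖v‖), mul_pos ha hb, sq_nonneg δ]
end

section
/- Let E be a real inner product space, let ε ∈ [0,1) and δ ≥ 0, and let T : E → E satisfy ‖T(x) − T(y)‖² ≤ ε²‖x − y‖² + δ² for all x, y ∈ E. Suppose v* ∈ E is a fixed point of T (T(v*) = v*), and define the sequence v⁽⁰⁾ ∈ E, v⁽ᵏ⁺¹⁾ = T(v⁽ᵏ⁾). Then for every k ≥ 0: ‖v⁽ᵏ⁾ − v*‖² ≤ ε^{2k}‖v⁽⁰⁾ − v*‖² + δ²/(1 − ε²); consequently lim sup_{k→∞} ‖v⁽ᵏ⁾ − v*‖ ≤ δ/√(1 − ε²), i.e., the iterates converge into a ball of radius δ/√(1 − ε²) around v*. -/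
theorem stmt9 {E : Type*} [NormedAddCommGroup E] [InnerProductSpace ℝ E]
    (ε δ : ℝ) (hε : ε ∈ Set.Ico (0 : ℝ) 1) (hδ : 0 ≤ δ)
    (T : E → E)
    (hT : ∀ x y : E, ‖T x - T y‖ ^ 2 ≤ ε ^ 2 * ‖x - y‖ ^ 2 + δ ^ 2)
    (vstar : E) (hfix : T vstar = vstar)
    (v : ℕ → E) (hv : ∀ k, v (k + 1) = T (v k)) :
    (∀ k : ℕ, ‖v k - vstar‖ ^ 2 ≤ ε ^ (2 * k) * ‖v 0 - vstar‖ ^ 2 + δ ^ 2 / (1 - ε ^ 2)) ∧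
      Filter.limsup (fun k => ‖v k - vstar‖) Filter.atTop ≤ δ / Real.sqrt (1 - ε ^ 2) := by
  obtain ⟨hε0, hε1⟩ := hε
  have hpos : 0 < 1 - ε ^ 2 := by nlinarith
  set A := ‖v 0 - vstar‖ ^ 2 with hA
  set c := δ ^ 2 / (1 - ε ^ 2) with hc
  have hcval : c * (1 - ε ^ 2) = δ ^ 2 := div_mul_cancel₀ _ (ne_of_gt hpos)
  have hA0 : 0 ≤ A := sq_nonneg _
  have hc0 : 0 ≤ c := div_nonneg (sq_nonneg _) hpos.le
  have h1 : ∀ k : ℕ, ‖v k - vstar‖ ^ 2 ≤ ε ^ (2 * k) * A + c := by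
    intro k
    induction k with
    | zero => simp only [Nat.mul_zero, pow_zero, one_mul]; linarith
    | succ k ih =>
      have hstep : ‖v (k + 1) - vstar‖ ^ 2 ≤ ε ^ 2 * ‖v k - vstar‖ ^ 2 + δ ^ 2 := by
        have h := hT (v k) vstar
        rw [hfix] at h
        rw [hv k]; exact h
      have : ε ^ (2 * (k + 1)) = ε ^ 2 * ε ^ (2 * k) := by ring
      nlinarith [sq_nonneg ε, mul_le_mul_of_nonneg_left ih (sq_nonneg ε)]
  refine ⟨h1, ?_⟩
  set g : ℕ → ℝ := fun k => Real.sqrt (ε ^ (2 * k) * A + c) with hg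
  have hle : ∀ k, ‖v k - vstar‖ ≤ g k := by
    intro k
    have := h1 k
    have h := Real.sqrt_le_sqrt this
    rwa [Real.sqrt_sq (norm_nonneg _)] at h
  have htend : Filter.Tendsto g Filter.atTop (nhds (δ / Real.sqrt (1 - ε ^ 2))) := by
    have h0 : Filter.Tendsto (fun k : ℕ => ε ^ (2 * k) * A + c) Filter.atTop (nhds (0 * A + c)) := by
      refine Filter.Tendsto.add (Filter.Tendsto.mul_const _ ?_) tendsto_const_nhds
      have : ∀ k : ℕ, ε ^ (2 * k) = (ε ^ 2) ^ k := fun k => by rw [← pow_mul]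
      simp_rw [this]
      exact tendsto_pow_atTop_nhds_zero_of_lt_one (sq_nonneg _) (by nlinarith)
    have ht := (Real.continuous_sqrt.tendsto _).comp h0
    have heq : Real.sqrt (0 * A + c) = δ / Real.sqrt (1 - ε ^ 2) := by
      rw [zero_mul, zero_add, hc, Real.sqrt_div (sq_nonneg δ), Real.sqrt_sq hδ]
    rw [heq] at ht
    exact ht
  have hbound : Filter.IsBoundedUnder (· ≤ ·) Filter.atTop g :=
    htend.isBoundedUnder_le
  have hcob : Filter.IsCoboundedUnder (· ≤ ·) Filter.atTop (fun k => ‖v k - vstar‖) :=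
    Filter.isCoboundedUnder_le_of_le _ (fun k => norm_nonneg _)
  calc Filter.limsup (fun k => ‖v k - vstar‖) Filter.atTop
      ≤ Filter.limsup g Filter.atTop :=
        Filter.limsup_le_limsup (Filter.Eventually.of_forall hle) hcob hbound
    _ = δ / Real.sqrt (1 - ε ^ 2) := htend.limsup_eq
end

section
/- Let E be the Euclidean space ℝ^d, μ > 0, ρ > 0, and let ℓ : E → ℝ be continuous and μ-strongly convex. Let P : E → E be a proximal map of ℓ/ρ, i.e., for every v ∈ E, P(v) minimizes x ↦ (1/ρ)ℓ(x) + (1/2)‖x − v‖² over E. Let ε ∈ (0,1], δ ≥ 0, and let D : E → E satisfy the (ε, δ)-weakly nonexpansive residual condition. Define T = (1/2)I + (1/2)(2D − I)∘(2P − I), where I is the identity map. Then for all v, w ∈ E: ‖T(v) − T(w)‖² ≤ ε_T²‖v − w‖² + δ_T², where ε_T = (ρ + ρε + με + 2με²)/(ρ + μ + 2με) and δ_T² = (ρ + ρε + με + 2με²)·δ²/(ε(ρ + μ + 2με)). -/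
open scoped RealInnerProductSpace

section helpers
variable {E : Type*} [NormedAddCommGroup E] [InnerProductSpace ℝ E]

lemma norm_combo_sq (p x : E) (t : ℝ) :
    ‖p + t • (x - p)‖ ^ 2 = (1 - t) * ‖p‖ ^ 2 + t * ‖x‖ ^ 2 - t * (1 - t) * ‖x - p‖ ^ 2 := by
  have h1 : ∀ y : E, ‖y‖ ^ 2 = ⟪y, y⟫ := fun y => (real_inner_self_eq_norm_sq y).symm
  simp only [h1, inner_add_add_self, inner_sub_sub_self, real_inner_smul_left,
    real_inner_smul_right, inner_sub_left, inner_sub_right]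
  rw [real_inner_comm x p]
  ring

lemma combo_eq (p x : E) (t : ℝ) : (1 - t) • p + t • x = p + t • (x - p) := by
  rw [sub_smul, one_smul, smul_sub]; abel

lemma strong_min {f : E → ℝ} {m : ℝ} (hm : 0 ≤ m)
    (hconv : ConvexOn ℝ Set.univ (fun x => f x - (m / 2) * ‖x‖ ^ 2))
    {p : E} (hmin : IsMinOn f Set.univ p) (x : E) :
    f p + (m / 2) * ‖x - p‖ ^ 2 ≤ f x := by
  have hC0 : (0:ℝ) ≤ ‖x - p‖ ^ 2 := sq_nonneg _
  have key : ∀ t : ℝ, 0 < t → t ≤ 1 →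
      f p + (m / 2) * (1 - t) * ‖x - p‖ ^ 2 ≤ f x := by
    intro t ht0 ht1
    have hcv := hconv.2 (Set.mem_univ p) (Set.mem_univ x)
      (by linarith : (0:ℝ) ≤ 1 - t) (le_of_lt ht0) (by ring)
    simp only [smul_eq_mul] at hcv
    rw [combo_eq, norm_combo_sq] at hcv
    have hmp : f p ≤ f (p + t • (x - p)) := hmin (Set.mem_univ _)
    nlinarith [hcv, hmp, ht0, sq_nonneg ‖x - p‖]
  refine le_of_forall_pos_le_add ?_
  intro η hη
  set t : ℝ := min 1 (η / ((m / 2) * ‖x - p‖ ^ 2 + 1)) with htdef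
  have hden : (0:ℝ) < (m / 2) * ‖x - p‖ ^ 2 + 1 := by positivity
  have ht0 : 0 < t := lt_min one_pos (div_pos hη hden)
  have ht1 : t ≤ 1 := min_le_left _ _
  have h2 := key t ht0 ht1
  have htle : t * ((m / 2) * ‖x - p‖ ^ 2 + 1) ≤ η :=
    (le_div_iff₀ hden).mp (min_le_right _ _)
  nlinarith [h2, htle, ht0, hC0, hm]

lemma prox_firm (μ ρ : ℝ) (hμ : 0 < μ) (hρ : 0 < ρ) (ℓ : E → ℝ)
    (hsc : ConvexOn ℝ Set.univ (fun x => ℓ x - (μ / 2) * ‖x‖ ^ 2))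
    (P : E → E)
    (hP : ∀ v, IsMinOn (fun x => (1 / ρ) * ℓ x + (1 / 2) * ‖x - v‖ ^ 2) Set.univ (P v))
    (v w : E) :
    (1 + μ / ρ) * ‖P v - P w‖ ^ 2 ≤ ⟪P v - P w, v - w⟫ := by
  have hm : (0:ℝ) ≤ 1 + μ / ρ := by positivity
  have hconv : ∀ u : E, ConvexOn ℝ Set.univ
      (fun x => ((1/ρ) * ℓ x + (1/2) * ‖x - u‖ ^ 2) - ((1 + μ/ρ) / 2) * ‖x‖ ^ 2) := by
    intro u
    have h1 : ConvexOn ℝ Set.univ (fun x : E => (1/ρ) * (ℓ x - (μ/2) * ‖x‖ ^ 2)) := by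
      simpa [smul_eq_mul] using hsc.smul (le_of_lt (by positivity : (0:ℝ) < 1/ρ))
    have h2 : ConvexOn ℝ Set.univ (fun x : E => ‖u‖ ^ 2 / 2 - ⟪x, u⟫) := by
      refine ⟨convex_univ, ?_⟩
      intro x _ y _ a b ha hb hab
      simp only [smul_eq_mul]
      rw [inner_add_left, real_inner_smul_left, real_inner_smul_left]
      have h3 : a * (‖u‖ ^ 2 / 2) + b * (‖u‖ ^ 2 / 2) = ‖u‖ ^ 2 / 2 := by
        rw [← add_mul, hab, one_mul]
      linarith [h3]
    have heq : (fun x : E => ((1/ρ) * ℓ x + (1/2) * ‖x - u‖ ^ 2) - ((1 + μ/ρ) / 2) * ‖x‖ ^ 2)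
        = fun x : E => ((1/ρ) * (ℓ x - (μ/2) * ‖x‖ ^ 2)) + (‖u‖ ^ 2 / 2 - ⟪x, u⟫) := by
      funext x
      rw [norm_sub_sq_real]
      field_simp
      ring
    rw [heq]
    exact h1.add h2
  have k1 := strong_min hm (hconv v) (hP v) (P w)
  have k2 := strong_min hm (hconv w) (hP w) (P v)
  rw [show ‖P w - P v‖ = ‖P v - P w‖ from norm_sub_rev _ _] at k1
  simp only [← real_inner_self_eq_norm_sq, inner_sub_left, inner_sub_right] at k1 k2 ⊢
  linarith [k1, k2, real_inner_comm v (P v), real_inner_comm w (P w),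
    real_inner_comm v (P w), real_inner_comm w (P v), real_inner_comm (P w) (P v)]

lemma scalar_bound (μ ρ ε δ A Pn En Ia : ℝ) (hμ : 0 < μ) (hρ : 0 < ρ)
    (hε0 : 0 < ε) (hε1 : ε ≤ 1) (hδ : 0 ≤ δ) (hA : 0 ≤ A) (hPn : 0 ≤ Pn) (hEn : 0 ≤ En)
    (hfirm : (ρ + μ) * Pn ^ 2 ≤ ρ * Ia) (hcs : Ia ≤ Pn * A)
    (hres : En ^ 2 ≤ ε ^ 2 * (4 * Pn ^ 2 - 4 * Ia + A ^ 2) + δ ^ 2) :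
    Pn ^ 2 + 2 * Pn * En + En ^ 2
      ≤ ((ρ + ρ * ε + μ * ε + 2 * μ * ε ^ 2) / (ρ + μ + 2 * μ * ε)) ^ 2 * A ^ 2
        + (ρ + ρ * ε + μ * ε + 2 * μ * ε ^ 2) * δ ^ 2 / (ε * (ρ + μ + 2 * μ * ε)) := by
  have hPA : (ρ + μ) * Pn ≤ ρ * A := by
    rcases eq_or_lt_of_le hPn with h0 | h0
    · nlinarith [mul_nonneg hρ.le hA]
    · have h1 : ((ρ + μ) * Pn) * Pn ≤ (ρ * A) * Pn := by nlinarith [hfirm, hcs]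
      exact le_of_mul_le_mul_right h1 h0
  have hres2 : ρ * En ^ 2 ≤ ρ * ε ^ 2 * A ^ 2 + ρ * δ ^ 2 - 4 * μ * ε ^ 2 * Pn ^ 2 := by
    nlinarith [mul_le_mul_of_nonneg_left hres hρ.le,
      mul_le_mul_of_nonneg_left hfirm (by positivity : (0:ℝ) ≤ 4 * ε ^ 2)]
  have hyoung : 2 * (ε * (ρ + μ + 2 * μ * ε) * ρ) * (Pn * En)
      ≤ (ε * (ρ + μ + 2 * μ * ε)) ^ 2 * Pn ^ 2 + ρ ^ 2 * En ^ 2 := by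
    nlinarith [sq_nonneg (ε * (ρ + μ + 2 * μ * ε) * Pn - ρ * En)]
  have hDP : (ρ + μ + 2 * μ * ε) * (ρ + μ - 2 * μ * ε) * Pn ^ 2 ≤ ρ ^ 2 * A ^ 2 := by
    rcases le_or_gt (ρ + μ - 2 * μ * ε) 0 with h | h
    · nlinarith [sq_nonneg (ρ * A), sq_nonneg Pn,
        mul_nonpos_of_nonpos_of_nonneg
          (mul_nonpos_of_nonneg_of_nonpos (by positivity : (0:ℝ) ≤ ρ + μ + 2 * μ * ε) h)
          (sq_nonneg Pn)]
    · have h2 : ((ρ + μ) * Pn) * ((ρ + μ) * Pn) ≤ (ρ * A) * (ρ * A) :=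
        mul_self_le_mul_self (by positivity) hPA
      nlinarith [h2, sq_nonneg (μ * ε * Pn)]
  have f1 := mul_le_mul_of_nonneg_left hyoung
    (by positivity : (0:ℝ) ≤ ρ + μ + 2 * μ * ε)
  have f2 := mul_le_mul_of_nonneg_left hres2
    (by positivity : (0:ℝ) ≤ (ρ + ρ * ε + μ * ε + 2 * μ * ε ^ 2) * (ρ + μ + 2 * μ * ε))
  have f3 := mul_le_mul_of_nonneg_left hDP
    (by positivity : (0:ℝ) ≤ (ρ + ρ * ε + μ * ε + 2 * μ * ε ^ 2) * ε)
  have hkeyρ : ((Pn ^ 2 + 2 * Pn * En + En ^ 2) * (ε * (ρ + μ + 2 * μ * ε) ^ 2)) * ρ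
      ≤ ((ρ + ρ * ε + μ * ε + 2 * μ * ε ^ 2) ^ 2 * ε * A ^ 2
          + (ρ + ρ * ε + μ * ε + 2 * μ * ε ^ 2) * (ρ + μ + 2 * μ * ε) * δ ^ 2) * ρ := by
    linarith [f1, f2, f3]
  have hkey := le_of_mul_le_mul_right hkeyρ hρ
  have hrhs : ((ρ + ρ * ε + μ * ε + 2 * μ * ε ^ 2) / (ρ + μ + 2 * μ * ε)) ^ 2 * A ^ 2
        + (ρ + ρ * ε + μ * ε + 2 * μ * ε ^ 2) * δ ^ 2 / (ε * (ρ + μ + 2 * μ * ε))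
      = ((ρ + ρ * ε + μ * ε + 2 * μ * ε ^ 2) ^ 2 * ε * A ^ 2
          + (ρ + ρ * ε + μ * ε + 2 * μ * ε ^ 2) * (ρ + μ + 2 * μ * ε) * δ ^ 2)
        / (ε * (ρ + μ + 2 * μ * ε) ^ 2) := by
    rw [div_pow, div_mul_eq_mul_div, div_add_div _ _ (by positivity) (by positivity),
      div_eq_div_iff (by positivity) (by positivity)]
    ring
  rw [hrhs]
  exact (le_div_iff₀ (by positivity)).mpr hkey

end helpers

theorem stmt10 {d : ℕ} (μ ρ : ℝ) (hμ : 0 < μ) (hρ : 0 < ρ)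
    (ℓ : EuclideanSpace ℝ (Fin d) → ℝ) (hcont : Continuous ℓ)
    (hsc : ConvexOn ℝ Set.univ (fun x => ℓ x - (μ / 2) * ‖x‖ ^ 2))
    (P : EuclideanSpace ℝ (Fin d) → EuclideanSpace ℝ (Fin d))
    (hP : ∀ v, IsMinOn (fun x => (1 / ρ) * ℓ x + (1 / 2) * ‖x - v‖ ^ 2) Set.univ (P v))
    (ε δ : ℝ) (hε : ε ∈ Set.Ioc (0 : ℝ) 1) (hδ : 0 ≤ δ)
    (D : EuclideanSpace ℝ (Fin d) → EuclideanSpace ℝ (Fin d))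
    (hD : ResidualCond ε δ D)
    (T : EuclideanSpace ℝ (Fin d) → EuclideanSpace ℝ (Fin d))
    (hT : T = fun v =>
      (1 / 2 : ℝ) • v + (1 / 2 : ℝ) • (2 • D (2 • P v - v) - (2 • P v - v))) :
    ∀ v w : EuclideanSpace ℝ (Fin d),
      ‖T v - T w‖ ^ 2
        ≤ ((ρ + ρ * ε + μ * ε + 2 * μ * ε ^ 2) / (ρ + μ + 2 * μ * ε)) ^ 2 * ‖v - w‖ ^ 2
          + (ρ + ρ * ε + μ * ε + 2 * μ * ε ^ 2) * δ ^ 2 / (ε * (ρ + μ + 2 * μ * ε)) := by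
  intro v w
  obtain ⟨hε0, hε1⟩ := hε
  set p : EuclideanSpace ℝ (Fin d) := P v - P w with hp
  set e : EuclideanSpace ℝ (Fin d) :=
    (D (2 • P v - v) - (2 • P v - v)) - (D (2 • P w - w) - (2 • P w - w)) with he
  -- decomposition T v - T w = p + e
  have hTd : T v - T w = p + e := by
    rw [hT, hp, he]
    simp only
    generalize D (2 • P v - v) = A1
    generalize D (2 • P w - w) = B1
    module
  -- firm nonexpansiveness of the prox
  have hfirm0 := prox_firm μ ρ hμ hρ ℓ hsc P hP v w
  have hfirm : (ρ + μ) * ‖p‖ ^ 2 ≤ ρ * ⟪p, v - w⟫ := by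
    have := mul_le_mul_of_nonneg_left hfirm0 hρ.le
    rw [hp]
    calc (ρ + μ) * ‖P v - P w‖ ^ 2 = ρ * ((1 + μ / ρ) * ‖P v - P w‖ ^ 2) := by
          field_simp
      _ ≤ ρ * ⟪P v - P w, v - w⟫ := this
  have hcs : ⟪p, v - w⟫ ≤ ‖p‖ * ‖v - w‖ := real_inner_le_norm _ _
  -- residual condition
  have hres0 := hD (2 • P v - v) (2 • P w - w)
  have hRvw : ‖(2 • P v - v : EuclideanSpace ℝ (Fin d)) - (2 • P w - w)‖ ^ 2
      = 4 * ‖p‖ ^ 2 - 4 * ⟪p, v - w⟫ + ‖v - w‖ ^ 2 := by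
    have hid : (2 • P v - v : EuclideanSpace ℝ (Fin d)) - (2 • P w - w)
        = (2:ℝ) • p - (v - w) := by rw [hp]; module
    rw [hid, norm_sub_sq_real, norm_smul, real_inner_smul_left, Real.norm_ofNat]
    ring
  have hres : ‖e‖ ^ 2 ≤ ε ^ 2 * (4 * ‖p‖ ^ 2 - 4 * ⟪p, v - w⟫ + ‖v - w‖ ^ 2) + δ ^ 2 := by
    rw [he, ← hRvw]
    exact hres0
  -- triangle-type bound
  have htri : ‖p + e‖ ^ 2 ≤ ‖p‖ ^ 2 + 2 * ‖p‖ * ‖e‖ + ‖e‖ ^ 2 := by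
    rw [norm_add_sq_real]
    nlinarith [real_inner_le_norm p e]
  have hmain := scalar_bound μ ρ ε δ ‖v - w‖ ‖p‖ ‖e‖ ⟪p, v - w⟫ hμ hρ hε0 hε1 hδ
    (norm_nonneg _) (norm_nonneg _) (norm_nonneg _) hfirm hcs hres
  rw [hTd]
  linarith [htri, hmain]
end

section
/- Let E be the Euclidean space ℝ^d (or a real Hilbert space), μ > 0, ρ > 0, and let ℓ : E → ℝ be continuous and μ-strongly convex. Let P : E → E be a proximal map of ℓ/ρ. Then the map N = −(2P − I) is ρ/(ρ+μ)-averaged; equivalently, for all v, w ∈ E: ‖N(v) − N(w)‖² ≤ ‖v − w‖² − (μ/ρ)·‖(v − N(v)) − (w − N(w))‖². -/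
local notation "⟪" x ", " y "⟫" => @inner ℝ _ _ x y

theorem combo_norm {E : Type*} [NormedAddCommGroup E] [InnerProductSpace ℝ E]
    (y z : E) (t : ℝ) :
    ‖(1-t) • y + t • z‖^2 = (1-t)*‖y‖^2 + t*‖z‖^2 - t*(1-t)*‖z-y‖^2 := by
  simp only [← real_inner_self_eq_norm_sq, inner_add_left, inner_add_right,
    inner_sub_left, inner_sub_right, real_inner_smul_left, real_inner_smul_right]
  rw [real_inner_comm z y]
  ring

theorem quad_growth {E : Type*} [NormedAddCommGroup E] [InnerProductSpace ℝ E]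
    (μ ρ : ℝ) (hμ : 0 < μ) (hρ : 0 < ρ) (ℓ : E → ℝ)
    (hsc : ConvexOn ℝ Set.univ (fun x => ℓ x - (μ / 2) * ‖x‖ ^ 2))
    (P : E → E)
    (hP : ∀ v, IsMinOn (fun x => (1 / ρ) * ℓ x + (1 / 2) * ‖x - v‖ ^ 2) Set.univ (P v))
    (v x : E) :
    (1/ρ) * ℓ (P v) + (1/2) * ‖P v - v‖^2 + ((1 + μ/ρ)/2) * ‖x - P v‖^2
      ≤ (1/ρ) * ℓ x + (1/2) * ‖x - v‖^2 := by
  have step : ∀ t ∈ Set.Ioo (0:ℝ) 1,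
      (1/ρ) * ℓ (P v) + (1/2) * ‖P v - v‖^2 + ((1 + μ/ρ)/2) * (1-t) * ‖x - P v‖^2
        ≤ (1/ρ) * ℓ x + (1/2) * ‖x - v‖^2 := by
    intro t ht
    have hg := hsc.2 (Set.mem_univ (P v)) (Set.mem_univ x)
      (by linarith [ht.2] : (0:ℝ) ≤ 1 - t) (le_of_lt ht.1) (by ring)
    simp only [smul_eq_mul] at hg
    have hm1 : ‖(1-t) • P v + t • x‖^2
        = (1-t)*‖P v‖^2 + t*‖x‖^2 - t*(1-t)*‖x - P v‖^2 := combo_norm _ _ _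
    have hmv : ((1-t) • P v + t • x) - v = (1-t) • (P v - v) + t • (x - v) := by
      module
    have hm2 : ‖((1-t) • P v + t • x) - v‖^2
        = (1-t)*‖P v - v‖^2 + t*‖x - v‖^2 - t*(1-t)*‖x - P v‖^2 := by
      rw [hmv, combo_norm]
      congr 3
      abel
    have hmin : (1/ρ) * ℓ (P v) + (1/2) * ‖P v - v‖^2
        ≤ (1/ρ) * ℓ ((1-t) • P v + t • x) + (1/2) * ‖((1-t) • P v + t • x) - v‖^2 :=
      hP v (Set.mem_univ _)
    have hℓm : ℓ ((1-t) • P v + t • x)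
        ≤ (1-t)*ℓ (P v) + t*ℓ x - (μ/2)*t*(1-t)*‖x - P v‖^2 := by nlinarith [hg, hm1]
    have hρm := mul_le_mul_of_nonneg_left hℓm (by positivity : (0:ℝ) ≤ 1/ρ)
    have hA : (1/ρ) * ℓ (P v) + (1/2) * ‖P v - v‖^2
        ≤ (1/ρ)*((1-t)*ℓ (P v) + t*ℓ x - (μ/2)*t*(1-t)*‖x - P v‖^2)
          + (1/2)*((1-t)*‖P v - v‖^2 + t*‖x - v‖^2 - t*(1-t)*‖x - P v‖^2) := by
      linarith [hmin, hρm, hm2.le, hm2.ge]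
    have := mul_pos ht.1 (by norm_num : (0:ℝ) < 1)
    refine le_of_mul_le_mul_left ?_ ht.1
    have hρ' : ρ ≠ 0 := ne_of_gt hρ
    have heq : t * ((1/ρ) * ℓ (P v) + (1/2) * ‖P v - v‖^2 + ((1 + μ/ρ)/2) * (1-t) * ‖x - P v‖^2)
        - t * ((1/ρ) * ℓ x + (1/2) * ‖x - v‖^2)
        = ((1/ρ) * ℓ (P v) + (1/2) * ‖P v - v‖^2)
          - ((1/ρ)*((1-t)*ℓ (P v) + t*ℓ x - (μ/2)*t*(1-t)*‖x - P v‖^2)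
          + (1/2)*((1-t)*‖P v - v‖^2 + t*‖x - v‖^2 - t*(1-t)*‖x - P v‖^2)) := by
      field_simp
      ring
    linarith [hA, heq.le, heq.ge]
  have hev : ∀ᶠ t in nhdsWithin (0:ℝ) (Set.Ioi 0),
      (1/ρ) * ℓ (P v) + (1/2) * ‖P v - v‖^2 + ((1 + μ/ρ)/2) * (1-t) * ‖x - P v‖^2
        ≤ (1/ρ) * ℓ x + (1/2) * ‖x - v‖^2 :=
    Filter.eventually_of_mem (Ioo_mem_nhdsGT_of_mem ⟨le_refl 0, zero_lt_one⟩) step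
  have hcont2 : Continuous fun t : ℝ =>
      (1/ρ) * ℓ (P v) + (1/2) * ‖P v - v‖^2 + ((1 + μ/ρ)/2) * (1-t) * ‖x - P v‖^2 := by
    exact continuous_const.add ((continuous_const.mul
      (continuous_const.sub continuous_id)).mul continuous_const)
  have htd := ((hcont2.tendsto 0).mono_left (nhdsWithin_le_nhds
    (s := Set.Ioi (0:ℝ))))
  have hle := le_of_tendsto htd hev
  simp only [sub_zero, mul_one] at hle
  linarith [hle]

theorem key_mono {E : Type*} [NormedAddCommGroup E] [InnerProductSpace ℝ E]
    (μ ρ : ℝ) (hμ : 0 < μ) (hρ : 0 < ρ) (ℓ : E → ℝ)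
    (hsc : ConvexOn ℝ Set.univ (fun x => ℓ x - (μ / 2) * ‖x‖ ^ 2))
    (P : E → E)
    (hP : ∀ v, IsMinOn (fun x => (1 / ρ) * ℓ x + (1 / 2) * ‖x - v‖ ^ 2) Set.univ (P v))
    (v w : E) :
    (1 + μ/ρ) * ‖P v - P w‖^2 ≤ ⟪P v - P w, v - w⟫ := by
  have h1 := quad_growth μ ρ hμ hρ ℓ hsc P hP v (P w)
  have h2 := quad_growth μ ρ hμ hρ ℓ hsc P hP w (P v)
  have hrev : ‖P w - P v‖^2 = ‖P v - P w‖^2 := by rw [norm_sub_rev]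
  have hid : ‖P w - v‖^2 - ‖P v - v‖^2 + ‖P v - w‖^2 - ‖P w - w‖^2
      = 2 * ⟪P v - P w, v - w⟫ := by
    simp only [norm_sub_sq_real, inner_sub_left, inner_sub_right]
    ring
  rw [hrev] at h1
  linarith [h1, h2, hid.le, hid.ge]

theorem expand_sub_smul {E : Type*} [NormedAddCommGroup E] [InnerProductSpace ℝ E]
    (u s : E) (a : ℝ) :
    ‖u - a • s‖^2 = ‖u‖^2 - 2*a*⟪u, s⟫ + a^2*‖s‖^2 := by
  simp only [← real_inner_self_eq_norm_sq, inner_sub_left, inner_sub_right,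
    real_inner_smul_left, real_inner_smul_right]
  rw [real_inner_comm s u]
  ring

theorem stmt11 {d : ℕ} (μ ρ : ℝ) (hμ : 0 < μ) (hρ : 0 < ρ)
    (ℓ : EuclideanSpace ℝ (Fin d) → ℝ) (hcont : Continuous ℓ)
    (hsc : ConvexOn ℝ Set.univ (fun x => ℓ x - (μ / 2) * ‖x‖ ^ 2))
    (P : EuclideanSpace ℝ (Fin d) → EuclideanSpace ℝ (Fin d))
    (hP : ∀ v, IsMinOn (fun x => (1 / ρ) * ℓ x + (1 / 2) * ‖x - v‖ ^ 2) Set.univ (P v))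
    (N : EuclideanSpace ℝ (Fin d) → EuclideanSpace ℝ (Fin d))
    (hN : N = fun v => -(2 • P v - v)) :
    (∃ R : EuclideanSpace ℝ (Fin d) → EuclideanSpace ℝ (Fin d),
        (∀ x y, ‖R x - R y‖ ≤ ‖x - y‖) ∧
        N = fun v => (ρ / (ρ + μ)) • R v + (1 - ρ / (ρ + μ)) • v) ∧
      ∀ v w : EuclideanSpace ℝ (Fin d),
        ‖N v - N w‖ ^ 2
          ≤ ‖v - w‖ ^ 2 - (μ / ρ) * ‖(v - N v) - (w - N w)‖ ^ 2 := by
  have hρ' : ρ ≠ 0 := ne_of_gt hρ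
  have hρμ : ρ + μ ≠ 0 := by positivity
  have key := fun v w => key_mono μ ρ hμ hρ ℓ hsc P hP v w
  have hNv : ∀ v, N v = v - (2:ℝ) • P v := by
    intro v; simp only [hN]; module
  constructor
  · refine ⟨fun v => v - (2*(1 + μ/ρ)) • P v, ?_, ?_⟩
    · intro a b
      have hd : (a - (2*(1 + μ/ρ)) • P a) - (b - (2*(1 + μ/ρ)) • P b)
          = (a - b) - (2*(1 + μ/ρ)) • (P a - P b) := by module
      have hc0 : (0:ℝ) < 1 + μ/ρ := by positivity
      have hk := key a b
      have hsq : ‖(a - (2*(1 + μ/ρ)) • P a) - (b - (2*(1 + μ/ρ)) • P b)‖^2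
          ≤ ‖a - b‖^2 := by
        rw [hd, expand_sub_smul, real_inner_comm]
        nlinarith [hk, mul_le_mul_of_nonneg_left hk (by positivity : (0:ℝ) ≤ 4*(1 + μ/ρ))]
      nlinarith [hsq, norm_nonneg ((a - (2*(1 + μ/ρ)) • P a) - (b - (2*(1 + μ/ρ)) • P b)),
        norm_nonneg (a - b)]
    · funext v
      rw [hNv v]
      match_scalars
      · field_simp
        ring
      · field_simp
  · intro v w
    have hNd : N v - N w = (v - w) - (2:ℝ) • (P v - P w) := by
      rw [hNv v, hNv w]; module
    have hvd : (v - N v) - (w - N w) = (2:ℝ) • (P v - P w) := by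
      rw [hNv v, hNv w]; module
    rw [hNd, hvd, expand_sub_smul, real_inner_comm]
    have h4 : ‖(2:ℝ) • (P v - P w)‖^2 = 4*‖P v - P w‖^2 := by
      rw [norm_smul]; simp; ring
    rw [h4]
    have hk := key v w
    have : (μ/ρ) * (4*‖P v - P w‖^2) = 4*((μ/ρ)*‖P v - P w‖^2) := by ring
    nlinarith [hk]
end

section
/- Let (β_k)_{k≥0} be a sequence of nonnegative real numbers, let (a_k)_{k≥0} be a sequence of nonnegative real numbers with a_k → 0, and let η ∈ [0,1). Suppose that for every k, at least one of the following holds: β_{k+1} ≤ a_k, or β_{k+1} ≤ η·β_k. Then β_k → 0 as k → ∞. -/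
theorem stmt17 (β a : ℕ → ℝ) (hβ : ∀ k, 0 ≤ β k) (ha : ∀ k, 0 ≤ a k)
    (halim : Filter.Tendsto a Filter.atTop (nhds 0))
    (η : ℝ) (hη : η ∈ Set.Ico (0 : ℝ) 1)
    (hstep : ∀ k, β (k + 1) ≤ a k ∨ β (k + 1) ≤ η * β k) :
    Filter.Tendsto β Filter.atTop (nhds 0) := by
  obtain ⟨hη0, hη1⟩ := hη
  rw [Metric.tendsto_atTop] at halim ⊢
  intro ε hε
  obtain ⟨N, hN⟩ := halim (ε / 2) (by linarith)
  have haN : ∀ k ≥ N, a k < ε / 2 := by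
    intro k hk
    have := hN k hk
    rw [Real.dist_eq, sub_zero, abs_of_nonneg (ha k)] at this
    exact this
  -- induction bound
  have key : ∀ n, β (N + n) ≤ ε / 2 + η ^ n * β N := by
    intro n
    induction n with
    | zero => simp; linarith [hβ N]
    | succ n ih =>
      rcases hstep (N + n) with h | h
      · have := haN (N + n) (Nat.le_add_right N n)
        have hpow : 0 ≤ η ^ (n+1) * β N := mul_nonneg (pow_nonneg hη0 _) (hβ N)
        calc β (N + (n+1)) = β (N + n + 1) := by ring_nf
          _ ≤ a (N + n) := h
          _ ≤ ε / 2 + η ^ (n+1) * β N := by linarith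
      · calc β (N + (n+1)) = β (N + n + 1) := by ring_nf
          _ ≤ η * β (N + n) := h
          _ ≤ η * (ε / 2 + η ^ n * β N) := by
              exact mul_le_mul_of_nonneg_left ih hη0
          _ = η * (ε / 2) + η ^ (n+1) * β N := by ring
          _ ≤ ε / 2 + η ^ (n+1) * β N := by nlinarith
  -- choose M with η^M * β N < ε/2
  have hpow : Filter.Tendsto (fun n => η ^ n * β N) Filter.atTop (nhds 0) := by
    have := (tendsto_pow_atTop_nhds_zero_of_lt_one hη0 hη1).mul_const (β N)
    simpa using this
  rw [Metric.tendsto_atTop] at hpow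
  obtain ⟨M, hM⟩ := hpow (ε / 2) (by linarith)
  refine ⟨N + M, fun k hk => ?_⟩
  obtain ⟨n, rfl⟩ : ∃ n, k = N + n := ⟨k - N, by omega⟩
  have hnM : M ≤ n := by omega
  have h1 := key n
  have h2 := hM n hnM
  rw [Real.dist_eq, sub_zero, abs_of_nonneg
    (mul_nonneg (pow_nonneg hη0 _) (hβ N))] at h2
  rw [Real.dist_eq, sub_zero, abs_of_nonneg (hβ _)]
  linarith
end
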